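/- Let m ≥ 2, let c, X, P, Q ∈ EuclideanSpace ℝ m and R > 0 satisfy ‖P − c‖ = R, ‖Q − c‖ = R, ‖X − c‖ < R, and X ∈ segment ℝ P Q (X lies on the line segment joining P and Q). If the inner product ⟪P − X, c − X⟫ ≥ 0, then ‖Q − X‖ ≤ ‖P − X‖, and moreover ‖Q − X‖ = ‖P − X‖ if and only if ⟪P − X, c − X⟫ = 0. -/

import Mathlib

open Metric

/-- **Chord comparison in a Euclidean ball.**
Let `P, Q` be points of the sphere of radius `R` about `c` and let `X` be an interior point
lying on the segment `[P, Q]`. If the angle at `X` between the direction toward `P` and the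
direction toward `c` is at most `π/2` (i.e. `⟪P − X, c − X⟫ ≥ 0`), then `‖Q − X‖ ≤ ‖P − X‖`,
with equality iff `⟪P − X, c − X⟫ = 0`. -/
theorem stmt14 (m : ℕ) (hm : 2 ≤ m) (c X P Q : EuclideanSpace ℝ (Fin m)) (R : ℝ)
    (hP : ‖P - c‖ = R) (hQ : ‖Q - c‖ = R) (hX : ‖X - c‖ < R)
    (hseg : X ∈ segment ℝ P Q)
    (hangle : 0 ≤ (inner ℝ (P - X) (c - X) : ℝ)) :
    ‖Q - X‖ ≤ ‖P - X‖ ∧ (‖Q - X‖ = ‖P - X‖ ↔ (inner ℝ (P - X) (c - X) : ℝ) = 0) := by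
  obtain ⟨a, b, ha, hb, hab, hXeq⟩ := hseg
  have ha' : a = 1 - b := by linarith
  subst ha'
  have hPX : P - X = b • (P - Q) := by rw [← hXeq]; module
  have hQX : Q - X = (-(1 - b)) • (P - Q) := by rw [← hXeq]; module
  set D := ‖P - Q‖ with hD
  set t : ℝ := inner ℝ (P - Q) (c - X) with ht
  have hnPX : ‖P - X‖ = b * D := by
    rw [hPX, norm_smul, Real.norm_eq_abs, abs_of_nonneg hb]
  have hnQX : ‖Q - X‖ = (1 - b) * D := by
    rw [hQX, norm_smul, Real.norm_eq_abs, abs_neg, abs_of_nonneg ha]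
  have hinner : (inner ℝ (P - X) (c - X) : ℝ) = b * t := by
    rw [hPX, real_inner_smul_left]
  -- X ≠ P : since ‖X - c‖ < R = ‖P - c‖
  have hb0 : 0 < b * D := by
    rcases lt_or_ge 0 (b * D) with h | h
    · exact h
    have hz : P - X = 0 := by
      rw [← norm_eq_zero, hnPX]
      exact le_antisymm (by simpa using h) (mul_nonneg hb (norm_nonneg _))
    have hXP : X = P := (sub_eq_zero.mp hz).symm
    rw [hXP, hP] at hX; linarith
  have hDnn : 0 ≤ D := norm_nonneg _
  have hDpos : 0 < D := by
    rcases hDnn.lt_or_eq with h | h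
    · exact h
    · nlinarith
  have hbpos : 0 < b := by
    rcases hb.lt_or_eq with h | h
    · exact h
    · nlinarith
  -- expand the two sphere equations
  have e1 : P - c = (P - X) - (c - X) := by abel
  have e2 : Q - c = (Q - X) - (c - X) := by abel
  have n1 : ‖P - c‖^2 = ‖P - X‖^2 - 2 * inner ℝ (P - X) (c - X) + ‖c - X‖^2 := by
    rw [e1]; exact norm_sub_sq_real _ _
  have n2 : ‖Q - c‖^2 = ‖Q - X‖^2 - 2 * inner ℝ (Q - X) (c - X) + ‖c - X‖^2 := by
    rw [e2]; exact norm_sub_sq_real _ _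
  have hinnerQ : (inner ℝ (Q - X) (c - X) : ℝ) = -(1 - b) * t := by
    rw [hQX, real_inner_smul_left]
  have hPQ : ‖P - c‖^2 = ‖Q - c‖^2 := by rw [hP, hQ]
  have heq : (b * D)^2 - 2 * (b * t) + ‖c - X‖^2
      = ((1 - b) * D)^2 - 2 * (-(1 - b) * t) + ‖c - X‖^2 := by
    rw [← hnPX, ← hnQX, ← hinner, ← hinnerQ, ← n1, ← n2, hPQ]
  have key2 : (2 * b - 1) * D^2 = 2 * t := by linear_combination heq
  have ht0 : 0 ≤ t := by
    rw [hinner] at hangle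
    exact nonneg_of_mul_nonneg_right hangle hbpos
  have hD2 : 0 < D^2 := by positivity
  have hble : 1 - b ≤ b := by nlinarith
  constructor
  · rw [hnPX, hnQX]
    exact mul_le_mul_of_nonneg_right hble hDnn
  · rw [hnPX, hnQX, hinner]
    constructor
    · intro h
      have hbb : 1 - b = b := mul_right_cancel₀ hDpos.ne' h
      have h2b : 2 * b - 1 = 0 := by linarith
      rw [h2b, zero_mul] at key2
      have : t = 0 := by linarith
      rw [this, mul_zero]
    · intro h
      have ht' : t = 0 := by
        rcases mul_eq_zero.mp h with h' | h'
        · exact absurd h' hbpos.ne'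
        · exact h'
      rw [ht'] at key2
      have h2b : 2 * b - 1 = 0 := by
        rcases mul_eq_zero.mp (by linarith : (2 * b - 1) * D^2 = 0) with h' | h'
        · exact h'
        · exact absurd h' hD2.ne'
      have : (1 : ℝ) - b = b := by linarith
      rw [this]
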